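/- For every integer n ≥ 0, the n-th Legendre polynomial has the explicit monomial expansion P_n(η) = Σ_{k} (−1)^{(n-k)/2} (n + k)! / ( 2^n · k! · ((n − k)/2)! · ((n + k)/2)! ) · η^k, where the sum runs over integers k with 0 ≤ k ≤ n and k ≡ n (mod 2). -/

import Mathlib

open Polynomial

/-- The n-th Legendre polynomial, defined via the Rodrigues formula
P_n(eta) = (1/(2^n n!)) d^n/d eta^n (eta^2 - 1)^n. -/
noncomputable def legendre (n : ℕ) : Polynomial ℝ :=
  ((1 : ℝ) / (2 ^ n * n.factorial)) • (Polynomial.derivative^[n] ((X ^ 2 - 1) ^ n))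

/-- Explicit monomial expansion of the Legendre polynomial:
P_n(eta) = Σ_{0 ≤ k ≤ n, k ≡ n (mod 2)}
  (-1)^{(n-k)/2} (n+k)! / (2^n k! ((n-k)/2)! ((n+k)/2)!) eta^k. -/
theorem stmt_9 (n : ℕ) (η : ℝ) :
    (legendre n).eval η =
      ∑ k ∈ (Finset.range (n + 1)).filter (fun k => k % 2 = n % 2),
        (-1 : ℝ) ^ ((n - k) / 2) * ((n + k).factorial : ℝ) /
          ((2 : ℝ) ^ n * (k.factorial : ℝ) * (((n - k) / 2).factorial : ℝ) *
            (((n + k) / 2).factorial : ℝ)) * η ^ k := by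
  have key : (derivative^[n] ((X ^ 2 - 1 : ℝ[X]) ^ n)).eval η
      = ∑ j ∈ Finset.range (n+1),
          (-1:ℝ)^(j+n) * n.choose j * (2*j).descFactorial n * η ^ (2*j - n) := by
    rw [sub_pow, iterate_derivative_sum, eval_finset_sum]
    refine Finset.sum_congr rfl fun j hj => ?_
    have h : ((-1:ℝ[X]) ^ (j+n) * (X^2)^j * 1^(n-j) * (n.choose j : ℝ[X]))
        = Polynomial.C ((-1:ℝ)^(j+n) * n.choose j) * X^(2*j) := by
      rw [map_mul, map_pow, map_natCast, map_neg, map_one, ← pow_mul]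
      ring
    rw [h, iterate_derivative_C_mul, iterate_derivative_X_pow_eq_C_mul]
    simp [mul_assoc, mul_comm, mul_left_comm]
  have hleg : (legendre n).eval η = (1/((2:ℝ)^n * n.factorial)) *
      ∑ j ∈ Finset.range (n+1),
          (-1:ℝ)^(j+n) * n.choose j * (2*j).descFactorial n * η ^ (2*j - n) := by
    rw [legendre, eval_smul, key, smul_eq_mul]
  rw [hleg, Finset.mul_sum]
  rw [← Finset.sum_filter_of_ne (p := fun j => n ≤ 2*j)
    (by intro j hj h
        by_contra hc
        apply h
        have : (2*j).descFactorial n = 0 := Nat.descFactorial_eq_zero_iff_lt.2 (by omega)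
        simp [this])]
  refine (Finset.sum_nbij' (fun j => 2*j - n) (fun k => (n+k)/2) ?_ ?_ ?_ ?_ ?_)
  · intro a ha
    simp only [Finset.mem_filter, Finset.mem_range] at ha ⊢
    omega
  · intro a ha
    simp only [Finset.mem_filter, Finset.mem_range] at ha ⊢
    omega
  · intro a ha
    simp only [Finset.mem_filter, Finset.mem_range] at ha
    show (n + (2*a - n))/2 = a
    omega
  · intro a ha
    simp only [Finset.mem_filter, Finset.mem_range] at ha
    show 2*((n + a)/2) - n = a
    omega
  · intro a ha
    simp only [Finset.mem_filter, Finset.mem_range] at ha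
    obtain ⟨ha1, ha2⟩ := ha
    rw [show n - (2*a - n) = 2*(n - a) by omega, show n + (2*a - n) = 2*a by omega]
    rw [Nat.mul_div_cancel_left _ (by norm_num), Nat.mul_div_cancel_left _ (by norm_num)]
    have hD : ((2*a - n).factorial : ℝ) * ((2*a).descFactorial n : ℝ) = ((2*a).factorial : ℝ) := by
      exact_mod_cast congrArg (Nat.cast (R := ℝ))
        (Nat.factorial_mul_descFactorial (n := 2*a) (k := n) (by omega))
    have hC : ((n.choose a : ℝ)) * a.factorial * (n - a).factorial = n.factorial := by
      exact_mod_cast congrArg (Nat.cast (R := ℝ))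
        (Nat.choose_mul_factorial_mul_factorial (by omega : a ≤ n))
    have hsign : (-1:ℝ)^(a+n) = (-1:ℝ)^(n-a) := by
      rw [show a + n = (n - a) + 2*a by omega, pow_add, pow_mul]
      simp
    rw [hsign]
    have f1 : (n.factorial : ℝ) ≠ 0 := Nat.cast_ne_zero.2 n.factorial_ne_zero
    have f2 : ((2*a - n).factorial : ℝ) ≠ 0 := Nat.cast_ne_zero.2 (Nat.factorial_ne_zero _)
    have f3 : ((n - a).factorial : ℝ) ≠ 0 := Nat.cast_ne_zero.2 (Nat.factorial_ne_zero _)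
    have f4 : (a.factorial : ℝ) ≠ 0 := Nat.cast_ne_zero.2 (Nat.factorial_ne_zero _)
    have f5 : ((2:ℝ)^n) ≠ 0 := by positivity
    have hD' : ((2*a).descFactorial n : ℝ) = (2*a).factorial / (2*a - n).factorial := by
      rw [eq_div_iff f2]; linear_combination hD
    have hC' : (n.choose a : ℝ) = n.factorial / (a.factorial * (n - a).factorial) := by
      rw [eq_div_iff (mul_ne_zero f4 f3)]; linear_combination hC
    rw [hD', hC']
    field_simp
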